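/- Let q ≥ 2, let 𝒯 = {X_1 → expr_1, …, X_n → expr_n} be an SLP representing T with |T| ≥ q, and let X_i be a variable with a nonterminal rule and |val(X_i)| ≥ q. Then the number of positions u ∈ [1 : |T|-q+1] such that the node ξ(u, u+q-1) is labeled X_i equals vOcc(X_i) · (|t_i| - (q-1)). -/

import Mathlib

/-- A straight line program over alphabet `α`: variables are `Fin n` (variable
`X_i` of the paper corresponds to index `i-1`), each with either a terminal
rule (a single character) or a nonterminal rule `X_i → X_j X_k` with `j,k < i`. -/
structure SLP (α : Type) where
  n : ℕ
  npos : 0 < n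
  rule : Fin n → α ⊕ (Fin n × Fin n)
  wf : ∀ i jk, rule i = Sum.inr jk → jk.1 < i ∧ jk.2 < i

namespace SLP

variable {α : Type}

/-- the string `val(X_i)` derived by a variable -/
def val (S : SLP α) (i : Fin S.n) : List α :=
  match h : S.rule i with
  | Sum.inl a => [a]
  | Sum.inr jk =>
    have _h1 := (S.wf i jk h).1
    have _h2 := (S.wf i jk h).2
    S.val jk.1 ++ S.val jk.2
termination_by i.val

/-- the last variable `X_n` -/
def lastIdx (S : SLP α) : Fin S.n := ⟨S.n - 1, Nat.sub_lt S.npos Nat.one_pos⟩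

/-- the string `T` represented by the SLP -/
def text (S : SLP α) : List α := S.val S.lastIdx

/-- `T([i:j])`: the (1-based, inclusive) substring of a string -/
def substr (T : List α) (i j : ℕ) : List α := (T.drop (i - 1)).take (j + 1 - i)

/-- `pre(T,q)` -/
def spre (T : List α) (q : ℕ) : List α := T.take q

/-- `suf(T,q)` -/
def ssuf (T : List α) (q : ℕ) : List α := T.drop (T.length - q)

/-- `pre([b:e],q)` for intervals of positions -/
def ipre (b e q : ℕ) : Finset ℕ := Finset.Icc b (min (b + q - 1) e)

/-- `suf([b:e],q)` for intervals of positions -/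
def isuf (b e q : ℕ) : Finset ℕ := Finset.Icc (max b (e + 1 - q)) e

/-- `Occ(T,P)`: the set of (1-based) occurrences of `P` in `T` -/
def Occ [DecidableEq α] (T P : List α) : Finset ℕ :=
  (Finset.Icc 1 T.length).filter fun k => substr T k (k + P.length - 1) = P

/-- the multiset of labels of the nodes of the derivation tree rooted at
a node labeled `X_i` -/
def occsFrom (S : SLP α) (i : Fin S.n) : Multiset (Fin S.n) :=
  match h : S.rule i with
  | Sum.inl _ => {i}
  | Sum.inr jk =>
    have _h1 := (S.wf i jk h).1
    have _h2 := (S.wf i jk h).2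
    i ::ₘ (S.occsFrom jk.1 + S.occsFrom jk.2)
termination_by i.val

/-- `vOcc(X_i)`: the number of nodes of the derivation tree labeled `X_i` -/
def vOcc (S : SLP α) (i : Fin S.n) : ℕ := (S.occsFrom S.lastIdx).count i

/-- the string `t_i = suf(val(X_{ℓ(i)}),q-1) pre(val(X_{r(i)}),q-1)`
(and `[]` for a terminal rule) -/
def tstr (S : SLP α) (q : ℕ) (i : Fin S.n) : List α :=
  match S.rule i with
  | Sum.inl _ => []
  | Sum.inr jk => ssuf (S.val jk.1) (q - 1) ++ spre (S.val jk.2) (q - 1)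

/-- `label(X_i) = t_i([q:|t_i|])` -/
def labelStr (S : SLP α) (q : ℕ) (i : Fin S.n) : List α := (S.tstr q i).drop (q - 1)

/-- Nodes of the derivation tree are represented by the path from the root
(`false` = go to left child, `true` = go to right child).  `descend i p`
returns the label of the node reached from a node labeled `X_i` by path `p`. -/
def descend (S : SLP α) : Fin S.n → List Bool → Option (Fin S.n)
  | i, [] => some i
  | i, b :: p =>
    match S.rule i with
    | Sum.inl _ => none
    | Sum.inr jk => S.descend (if b then jk.2 else jk.1) p

/-- the label of the node of the derivation tree reached by path `p` from the root -/
def nodeVar (S : SLP α) (p : List Bool) : Option (Fin S.n) := S.descend S.lastIdx p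

/-- `p` is a valid node of the derivation tree -/
def IsNode (S : SLP α) (p : List Bool) : Prop := (S.nodeVar p).isSome

/-- the 0-based offset in `val(X_i)` of the part derived below path `p` -/
def offsetFrom (S : SLP α) : Fin S.n → List Bool → ℕ
  | _, [] => 0
  | i, b :: p =>
    match S.rule i with
    | Sum.inl _ => 0
    | Sum.inr jk =>
      if b then (S.val jk.1).length + S.offsetFrom jk.2 p
      else S.offsetFrom jk.1 p

/-- the 0-based offset in `T` of the interval derived by node `p` -/
def offset (S : SLP α) (p : List Bool) : ℕ := S.offsetFrom S.lastIdx p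

/-- `itv(v)`: the (1-based) interval of positions of `T` derived by node `p` -/
def itv (S : SLP α) (p : List Bool) : Finset ℕ :=
  match S.nodeVar p with
  | some i => Finset.Icc (S.offset p + 1) (S.offset p + (S.val i).length)
  | none => ∅

/-- `p = ξ(b,e)`: `p` is the deepest node whose interval contains `[b:e]`,
i.e. `itv(p) ⊇ [b:e]` and no proper descendant of `p` satisfies this. -/
def Stabs (S : SLP α) (p : List Bool) (b e : ℕ) : Prop :=
  S.IsNode p ∧ Finset.Icc b e ⊆ S.itv p ∧
  ∀ p' : List Bool, p <+: p' → p ≠ p' → S.IsNode p' → ¬ Finset.Icc b e ⊆ S.itv p'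

/-- `X_j` is a right `q`-gram neighbor of `X_i` -/
def RightNbr (S : SLP α) (q : ℕ) (i j : Fin S.n) : Prop :=
  i ≠ j ∧ ∃ u p p', 1 ≤ u ∧ u + q ≤ S.text.length ∧
    S.Stabs p u (u + q - 1) ∧ S.nodeVar p = some i ∧
    S.Stabs p' (u + 1) (u + q) ∧ S.nodeVar p' = some j

/-- `lm_q(X_i)`: the last variable of length `≥ q` on the sequence `i, ℓ(i), ℓ(ℓ(i)), …`
(meaningful when `|val(X_i)| ≥ q`) -/
def lm (S : SLP α) (q : ℕ) (i : Fin S.n) : Fin S.n :=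
  match h : S.rule i with
  | Sum.inl _ => i
  | Sum.inr jk =>
    have := (S.wf i jk h).1
    if (S.val jk.1).length < q then i else S.lm q jk.1
termination_by i.val

/-- `rm_q(X_i)`: the last variable of length `≥ q` on the sequence `i, r(i), r(r(i)), …` -/
def rm (S : SLP α) (q : ℕ) (i : Fin S.n) : Fin S.n :=
  match h : S.rule i with
  | Sum.inl _ => i
  | Sum.inr jk =>
    have := (S.wf i jk h).2
    if (S.val jk.2).length < q then i else S.rm q jk.2
termination_by i.val

/-- `lm_q` returning `null` (`none`) when `|val(X_i)| < q` -/
def lmOpt (S : SLP α) (q : ℕ) (i : Fin S.n) : Option (Fin S.n) :=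
  if (S.val i).length < q then none else some (S.lm q i)

/-- `rm_q` returning `null` (`none`) when `|val(X_i)| < q` -/
def rmOpt (S : SLP α) (q : ℕ) (i : Fin S.n) : Option (Fin S.n) :=
  if (S.val i).length < q then none else some (S.rm q i)

/-- `LSpine S i k`: `k` occurs in the sequence `i, ℓ(i), ℓ(ℓ(i)), …`
(the leftmost path of the derivation subtree rooted at a node labeled `X_i`) -/
inductive LSpine (S : SLP α) : Fin S.n → Fin S.n → Prop
  | refl (i : Fin S.n) : LSpine S i i
  | step {i k : Fin S.n} {jk : Fin S.n × Fin S.n} :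
      S.rule i = Sum.inr jk → LSpine S jk.1 k → LSpine S i k

end SLP
namespace SLP
variable {α : Type}

theorem val_inl (S : SLP α) {k : Fin S.n} {a : α} (h : S.rule k = Sum.inl a) :
    S.val k = [a] := by
  rw [val]; split <;> simp_all

theorem val_inr (S : SLP α) {k : Fin S.n} {jk} (h : S.rule k = Sum.inr jk) :
    S.val k = S.val jk.1 ++ S.val jk.2 := by
  rw [val]; split <;> simp_all

theorem val_pos (S : SLP α) (k : Fin S.n) : 0 < (S.val k).length := by
  rcases h : S.rule k with a | jk
  · simp [S.val_inl h]
  · have hlt := (S.wf k jk h).1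
    have ih := S.val_pos jk.1
    rw [S.val_inr h]; simp; omega
termination_by k.val

theorem descend_append (S : SLP α) (p p' : List Bool) (k : Fin S.n) :
    S.descend k (p ++ p') = (S.descend k p).bind fun m => S.descend m p' := by
  induction p generalizing k with
  | nil => simp [descend]
  | cons b p ih =>
    rcases h : S.rule k with a | jk <;> simp [descend, h, ih]

theorem offset_le (S : SLP α) (p : List Bool) (k m : Fin S.n)
    (h : S.descend k p = some m) :
    S.offsetFrom k p + (S.val m).length ≤ (S.val k).length := by
  induction p generalizing k with
  | nil =>
    simp [descend] at h; subst h; simp [offsetFrom]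
  | cons b p ih =>
    rcases hr : S.rule k with a | jk
    · simp [descend, hr] at h
    · rw [S.val_inr hr]
      simp only [descend, hr] at h
      simp only [offsetFrom, hr]
      cases b
      · simp only [if_neg Bool.false_ne_true, Bool.false_eq_true, if_false] at h ⊢
        have := ih jk.1 h
        simp; omega
      · simp only [if_true] at h ⊢
        have := ih jk.2 h
        simp; omega

theorem offsetFrom_append (S : SLP α) (p p' : List Bool) (k m : Fin S.n)
    (h : S.descend k p = some m) :
    S.offsetFrom k (p ++ p') = S.offsetFrom k p + S.offsetFrom m p' := by
  induction p generalizing k with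
  | nil => simp [descend] at h; subst h; simp [offsetFrom]
  | cons b p ih =>
    rcases hr : S.rule k with a | jk
    · simp [descend, hr] at h
    · simp only [descend, hr] at h
      simp only [List.cons_append, offsetFrom, hr]
      cases b
      · simp only [Bool.false_eq_true, if_false] at h ⊢
        exact ih jk.1 h
      · simp only [if_true] at h ⊢
        rw [ih jk.2 h]; omega


/-- all nodes (paths) of the derivation subtree rooted at a node labeled `X_k` -/
def allPaths (S : SLP α) (k : Fin S.n) : List (List Bool) :=
  match h : S.rule k with
  | Sum.inl _ => [[]]
  | Sum.inr jk =>
    have _h1 := (S.wf k jk h).1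
    have _h2 := (S.wf k jk h).2
    [] :: ((S.allPaths jk.1).map (List.cons false) ++ (S.allPaths jk.2).map (List.cons true))
termination_by k.val

theorem allPaths_inl (S : SLP α) {k : Fin S.n} {a : α} (h : S.rule k = Sum.inl a) :
    S.allPaths k = [[]] := by
  rw [allPaths]; split <;> simp_all

theorem allPaths_inr (S : SLP α) {k : Fin S.n} {jk} (h : S.rule k = Sum.inr jk) :
    S.allPaths k =
      [] :: ((S.allPaths jk.1).map (List.cons false) ++ (S.allPaths jk.2).map (List.cons true)) := by
  rw [allPaths]; split <;> simp_all

theorem mem_allPaths (S : SLP α) (k : Fin S.n) (p : List Bool) :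
    p ∈ S.allPaths k ↔ (S.descend k p).isSome := by
  rcases h : S.rule k with a | jk
  · rw [S.allPaths_inl h]; cases p <;> simp [descend, h]
  · have h1 := (S.wf k jk h).1
    have h2 := (S.wf k jk h).2
    rw [S.allPaths_inr h]
    cases p with
    | nil => simp [descend]
    | cons b p =>
      have ih1 := S.mem_allPaths jk.1 p
      have ih2 := S.mem_allPaths jk.2 p
      cases b <;> simp [descend, h, ← ih1, ← ih2]
termination_by k.val

theorem allPaths_nodup (S : SLP α) (k : Fin S.n) : (S.allPaths k).Nodup := by
  rcases h : S.rule k with a | jk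
  · rw [S.allPaths_inl h]; simp
  · have h1 := (S.wf k jk h).1
    have h2 := (S.wf k jk h).2
    have ih1 := S.allPaths_nodup jk.1
    have ih2 := S.allPaths_nodup jk.2
    rw [S.allPaths_inr h]
    refine List.nodup_cons.mpr ⟨?_, List.Nodup.append ?_ ?_ ?_⟩
    · simp
    · exact ih1.map (fun a b => by simp)
    · exact ih2.map (fun a b => by simp)
    · intro x hx hy
      simp only [List.mem_map] at hx hy
      obtain ⟨a, _, rfl⟩ := hx
      obtain ⟨b, _, hb⟩ := hy
      simp at hb
termination_by k.val

theorem occsFrom_eq (S : SLP α) (k : Fin S.n) :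
    S.occsFrom k = ((S.allPaths k).filterMap (S.descend k) : Multiset (Fin S.n)) := by
  rcases h : S.rule k with a | jk
  · rw [S.allPaths_inl h, occsFrom]; split <;> simp_all [descend]
  · have h1 := (S.wf k jk h).1
    have h2 := (S.wf k jk h).2
    have ih1 := S.occsFrom_eq jk.1
    have ih2 := S.occsFrom_eq jk.2
    rw [S.allPaths_inr h, occsFrom]
    split <;> rename_i heq
    · simp_all
    · rw [h] at heq
      obtain rfl : jk = _ := by injection heq
      rw [ih1, ih2]
      simp [List.filterMap_cons, descend, h, List.filterMap_map, Function.comp_def]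
termination_by k.val

theorem count_filterMap {β γ : Type*} [DecidableEq γ] (f : β → Option γ) (c : γ) (l : List β) :
    (l.filterMap f).count c = (l.filter (fun p => f p = some c)).length := by
  induction l with
  | nil => simp
  | cons x l ih =>
    rcases h : f x with _ | y
    · simp [List.filterMap_cons, h, ih]
    · by_cases hy : y = c <;>
        simp [List.filterMap_cons, h, List.count_cons, ih, hy, List.filter_cons]

theorem diverge {p p' : List Bool} (h1 : ¬ p <+: p') (h2 : ¬ p' <+: p) :
    ∃ (s r r' : List Bool) (b : Bool), p = s ++ b :: r ∧ p' = s ++ (!b) :: r' := by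
  induction p generalizing p' with
  | nil => exact absurd List.nil_prefix h1
  | cons x xs ih =>
    cases p' with
    | nil => exact absurd List.nil_prefix h2
    | cons y ys =>
      by_cases hxy : x = y
      · subst hxy
        have h1' : ¬ xs <+: ys := fun h => h1 (List.cons_prefix_cons.mpr ⟨rfl, h⟩)
        have h2' : ¬ ys <+: xs := fun h => h2 (List.cons_prefix_cons.mpr ⟨rfl, h⟩)
        obtain ⟨s, r, r', b, hp, hp'⟩ := ih h1' h2'
        exact ⟨x :: s, r, r', b, by simp [hp], by simp [hp']⟩
      · refine ⟨[], xs, ys, x, by simp, ?_⟩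
        cases x <;> cases y <;> simp_all


theorem itv_eq (S : SLP α) {p : List Bool} {m : Fin S.n} (h : S.nodeVar p = some m) :
    S.itv p = Finset.Icc (S.offset p + 1) (S.offset p + (S.val m).length) := by
  unfold itv; rw [h]

theorem descend_cons (S : SLP α) {k : Fin S.n} {jk} (h : S.rule k = Sum.inr jk)
    (b : Bool) (rest : List Bool) :
    S.descend k (b :: rest) = S.descend (if b then jk.2 else jk.1) rest := by
  simp [descend, h]

theorem offsetFrom_cons (S : SLP α) {k : Fin S.n} {jk} (h : S.rule k = Sum.inr jk)
    (b : Bool) (rest : List Bool) :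
    S.offsetFrom k (b :: rest) =
      if b then (S.val jk.1).length + S.offsetFrom jk.2 rest else S.offsetFrom jk.1 rest := by
  simp [offsetFrom, h]

theorem desc_false (S : SLP α) {s t : List Bool} {w m : Fin S.n} {jk}
    (hw : S.descend S.lastIdx s = some w) (hr : S.rule w = Sum.inr jk)
    (hm : S.descend S.lastIdx (s ++ false :: t) = some m) :
    S.offset s ≤ S.offset (s ++ false :: t) ∧
    S.offset (s ++ false :: t) + (S.val m).length ≤ S.offset s + (S.val jk.1).length := by
  have h1 := S.descend_append s (false :: t) S.lastIdx
  rw [hm, hw, Option.bind_some, S.descend_cons hr] at h1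
  simp only [Bool.false_eq_true, if_false] at h1
  have h2 : S.offset (s ++ false :: t) = S.offset s + S.offsetFrom jk.1 t := by
    unfold offset
    rw [S.offsetFrom_append s (false :: t) _ _ hw, S.offsetFrom_cons hr]
    simp
  have h3 := S.offset_le t jk.1 m h1.symm
  omega

theorem desc_true (S : SLP α) {s t : List Bool} {w m : Fin S.n} {jk}
    (hw : S.descend S.lastIdx s = some w) (hr : S.rule w = Sum.inr jk)
    (hm : S.descend S.lastIdx (s ++ true :: t) = some m) :
    S.offset s + (S.val jk.1).length ≤ S.offset (s ++ true :: t) ∧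
    S.offset (s ++ true :: t) + (S.val m).length ≤
      S.offset s + (S.val jk.1).length + (S.val jk.2).length := by
  have h1 := S.descend_append s (true :: t) S.lastIdx
  rw [hm, hw, Option.bind_some, S.descend_cons hr] at h1
  simp only [if_true] at h1
  have h2 : S.offset (s ++ true :: t) = S.offset s + ((S.val jk.1).length + S.offsetFrom jk.2 t) := by
    unfold offset
    rw [S.offsetFrom_append s (true :: t) _ _ hw, S.offsetFrom_cons hr]
    simp
  have h3 := S.offset_le t jk.2 m h1.symm
  omega

theorem node_prefix (S : SLP α) {s t : List Bool}
    (h : (S.descend S.lastIdx (s ++ t)).isSome) :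
    ∃ w, S.descend S.lastIdx s = some w := by
  rw [S.descend_append] at h
  rcases hd : S.descend S.lastIdx s with _ | w
  · rw [hd] at h; simp at h
  · exact ⟨w, rfl⟩

theorem rule_inr_of_child (S : SLP α) {w m : Fin S.n} {c : Bool} {t : List Bool}
    (h : S.descend w (c :: t) = some m) : ∃ jk, S.rule w = Sum.inr jk := by
  rcases hr : S.rule w with a | jk
  · simp [descend, hr] at h
  · exact ⟨jk, rfl⟩

theorem stabs_unique (S : SLP α) {p p' : List Bool} {b e : ℕ} (hbe : b ≤ e)
    (h : S.Stabs p b e) (h' : S.Stabs p' b e) : p = p' := by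
  by_contra hne
  by_cases h1 : p <+: p'
  · exact h.2.2 p' h1 hne h'.1 h'.2.1
  by_cases h2 : p' <+: p
  · exact h'.2.2 p h2 (Ne.symm hne) h.1 h.2.1
  obtain ⟨s, r, r', c, rfl, rfl⟩ := diverge h1 h2
  have hbmem : b ∈ Finset.Icc b e := by simp [hbe]
  obtain ⟨m, hm⟩ := Option.isSome_iff_exists.mp h.1
  obtain ⟨m', hm'⟩ := Option.isSome_iff_exists.mp h'.1
  have hbp := h.2.1 hbmem
  have hbp' := h'.2.1 hbmem
  rw [S.itv_eq hm, Finset.mem_Icc] at hbp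
  rw [S.itv_eq hm', Finset.mem_Icc] at hbp'
  have hmd : S.descend S.lastIdx (s ++ c :: r) = some m := hm
  have hmd' : S.descend S.lastIdx (s ++ (!c) :: r') = some m' := hm'
  obtain ⟨w, hw⟩ := S.node_prefix (s := s) (t := c :: r) (by rw [hmd]; rfl)
  have hdw : S.descend w (c :: r) = some m := by
    have h3 := S.descend_append s (c :: r) S.lastIdx
    rw [hmd, hw, Option.bind_some] at h3; exact h3.symm
  obtain ⟨jk, hr⟩ := S.rule_inr_of_child hdw
  cases c
  · simp only [Bool.not_false] at hmd' hbp'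
    have d1 := S.desc_false hw hr hmd
    have d2 := S.desc_true hw hr hmd'
    omega
  · simp only [Bool.not_true] at hmd' hbp'
    have d1 := S.desc_true hw hr hmd
    have d2 := S.desc_false hw hr hmd'
    omega


end SLP

/-- for a nonterminal variable `X_i` with `|val(X_i)| ≥ q`,
the number of positions `u ∈ [1:|T|-q+1]` whose `q`-gram `[u:u+q-1]` is stabbed
by a node labeled `X_i` equals `vOcc(X_i)·(|t_i| - (q-1))`. -/
theorem stmt14 {α : Type} (q : ℕ) (hq : 2 ≤ q) (S : SLP α)
    (hT : q ≤ S.text.length)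
    (i : Fin S.n) (jk : Fin S.n × Fin S.n)
    (hr : S.rule i = Sum.inr jk) (hi : q ≤ (S.val i).length) :
    Set.ncard {u : ℕ | 1 ≤ u ∧ u + q ≤ S.text.length + 1 ∧
        ∃ p : List Bool, S.Stabs p u (u + q - 1) ∧ S.nodeVar p = some i}
      = S.vOcc i * ((S.tstr q i).length - (q - 1)) := by
  classical
  have hvl : (S.val i).length = (S.val jk.1).length + (S.val jk.2).length := by
    rw [S.val_inr hr]; simp
  have hj1 := S.val_pos jk.1
  have hj2 := S.val_pos jk.2
  set vj := (S.val jk.1).length with hvj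
  set vk := (S.val jk.2).length with hvk
  set P : Finset (List Bool) :=
    ((S.allPaths S.lastIdx).filter (fun p => S.descend S.lastIdx p = some i)).toFinset with hP
  set R : List Bool → Finset ℕ := fun p =>
    Finset.Icc (S.offset p + max (vj + 2 - q) 1)
      (S.offset p + min vj ((S.val i).length + 1 - q)) with hRdef
  have hmemP : ∀ p : List Bool, p ∈ P ↔ S.nodeVar p = some i := by
    intro p
    rw [hP, List.mem_toFinset, List.mem_filter]
    constructor
    · intro h; have := h.2; simpa [SLP.nodeVar] using this
    · intro h
      have hd : S.descend S.lastIdx p = some i := h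
      exact ⟨(S.mem_allPaths _ p).mpr (by rw [hd]; rfl), by simp [hd]⟩
  -- the q-gram positions stabbed by node p
  have hoff : ∀ p : List Bool, S.nodeVar p = some i →
      S.offset p + (S.val i).length ≤ S.text.length := by
    intro p hp
    exact S.offset_le p S.lastIdx i hp
  have hstab : ∀ p : List Bool, S.nodeVar p = some i → ∀ u ∈ R p,
      S.Stabs p u (u + q - 1) := by
    intro p hp u hu
    rw [hRdef, Finset.mem_Icc] at hu
    have hpd : S.descend S.lastIdx p = some i := hp
    refine ⟨by rw [SLP.IsNode, hp]; rfl, ?_, ?_⟩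
    · rw [S.itv_eq hp]
      intro x hx
      rw [Finset.mem_Icc] at hx ⊢
      omega
    · rintro p' ⟨t, rfl⟩ hne hnode
      obtain ⟨m, hm⟩ := Option.isSome_iff_exists.mp hnode
      have hmd : S.descend S.lastIdx (p ++ t) = some m := hm
      cases t with
      | nil => simp at hne
      | cons b rest =>
        intro hsub
        cases b
        · have d := S.desc_false hpd hr hmd
          have hx := hsub (show u + q - 1 ∈ Finset.Icc u (u + q - 1) from by rw [Finset.mem_Icc]; omega)
          rw [S.itv_eq hm, Finset.mem_Icc] at hx
          omega
        · have d := S.desc_true hpd hr hmd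
          have hx := hsub (show u ∈ Finset.Icc u (u + q - 1) from by rw [Finset.mem_Icc]; omega)
          rw [S.itv_eq hm, Finset.mem_Icc] at hx
          omega
  have hmemR : ∀ p : List Bool, S.nodeVar p = some i →
      ∀ u : ℕ, S.Stabs p u (u + q - 1) → u ∈ R p := by
    intro p hp u hst
    obtain ⟨hn, hsub, hmin⟩ := hst
    have hpd : S.descend S.lastIdx p = some i := hp
    have h1 := hsub (by rw [Finset.mem_Icc]; omega : u ∈ Finset.Icc u (u + q - 1))
    have h2 := hsub (by rw [Finset.mem_Icc]; omega : u + q - 1 ∈ Finset.Icc u (u + q - 1))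
    rw [S.itv_eq hp, Finset.mem_Icc] at h1 h2
    have hL : S.descend S.lastIdx (p ++ [false]) = some jk.1 := by
      rw [S.descend_append, hpd, Option.bind_some, S.descend_cons hr]
      simp [SLP.descend]
    have hRt : S.descend S.lastIdx (p ++ [true]) = some jk.2 := by
      rw [S.descend_append, hpd, Option.bind_some, S.descend_cons hr]
      simp [SLP.descend]
    have hoffL : S.offset (p ++ [false]) = S.offset p := by
      show S.offsetFrom _ _ = S.offsetFrom _ _
      rw [S.offsetFrom_append p [false] _ _ hpd, S.offsetFrom_cons hr]
      simp [SLP.offsetFrom]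
    have hoffR : S.offset (p ++ [true]) = S.offset p + vj := by
      show S.offsetFrom _ _ = S.offsetFrom _ _ + vj
      rw [S.offsetFrom_append p [true] _ _ hpd, S.offsetFrom_cons hr]
      simp [SLP.offsetFrom, hvj]
    have nL := hmin (p ++ [false]) (List.prefix_append _ _) (by simp)
      (by rw [SLP.IsNode, show S.nodeVar (p ++ [false]) = some jk.1 from hL]; rfl)
    have nR := hmin (p ++ [true]) (List.prefix_append _ _) (by simp)
      (by rw [SLP.IsNode, show S.nodeVar (p ++ [true]) = some jk.2 from hRt]; rfl)
    rw [S.itv_eq (show S.nodeVar (p ++ [false]) = some jk.1 from hL), hoffL,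
      Finset.not_subset] at nL
    rw [S.itv_eq (show S.nodeVar (p ++ [true]) = some jk.2 from hRt), hoffR,
      Finset.not_subset] at nR
    obtain ⟨x, hx1, hx2⟩ := nL
    obtain ⟨y, hy1, hy2⟩ := nR
    rw [Finset.mem_Icc] at hx1 hy1
    rw [Finset.mem_Icc, not_and_or, not_le, not_le] at hx2 hy2
    rw [hRdef, Finset.mem_Icc]
    omega
  have hset : {u : ℕ | 1 ≤ u ∧ u + q ≤ S.text.length + 1 ∧
      ∃ p : List Bool, S.Stabs p u (u + q - 1) ∧ S.nodeVar p = some i}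
      = ↑(P.biUnion R) := by
    ext u
    simp only [Set.mem_setOf_eq, Finset.coe_biUnion, Set.mem_iUnion, Finset.mem_coe,
      Finset.mem_biUnion]
    constructor
    · rintro ⟨_, _, p, hst, hp⟩
      exact ⟨p, (hmemP p).mpr hp, hmemR p hp u hst⟩
    · rintro ⟨p, hpP, hu⟩
      have hp := (hmemP p).mp hpP
      have h3 := hoff p hp
      have hu' := hu
      rw [hRdef, Finset.mem_Icc] at hu'
      exact ⟨by omega, by omega, p, hstab p hp u hu, hp⟩
  rw [hset, Set.ncard_coe_finset]
  have hdisj : ∀ x ∈ P, ∀ y ∈ P, x ≠ y → Disjoint (R x) (R y) := by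
    intro x hx y hy hxy
    rw [Finset.disjoint_left]
    intro u hux huy
    exact hxy (S.stabs_unique (by omega)
      (hstab x ((hmemP x).mp hx) u hux) (hstab y ((hmemP y).mp hy) u huy))
  rw [Finset.card_biUnion hdisj]
  have hC : ∀ p ∈ P, (R p).card = (S.tstr q i).length - (q - 1) := by
    intro p _
    have htl : (S.tstr q i).length = min (q - 1) vj + min (q - 1) vk := by
      simp [SLP.tstr, hr, SLP.ssuf, SLP.spre]
      omega
    rw [hRdef, Nat.card_Icc, htl]
    omega
  rw [Finset.sum_congr rfl hC, Finset.sum_const, smul_eq_mul]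
  congr 1
  -- P.card = vOcc i
  rw [SLP.vOcc, S.occsFrom_eq, hP]
  rw [List.toFinset_card_of_nodup ((S.allPaths_nodup S.lastIdx).filter _)]
  rw [Multiset.coe_count, SLP.count_filterMap]
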